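/- Let A ∈ ℝ and let y₁, y₂, x₁, x₂ : ℝ → ℝ be differentiable functions satisfying y₁' = x₁, y₂' = x₂, x₁' = −A y₁ − 2 y₁ y₂, x₂' = −16A y₂ − y₁² − 16 y₂². Then the functions z₁ = y₁², z₂ = y₂, z₃ = x₂, z₄ = y₁x₁, z₅ = 3x₁² + 2y₁²y₂ satisfy the system (8): z₁' = 2z₄, z₂' = z₃, z₃' = −z₁ − 16A z₂ − 16 z₂², z₄' = −A z₁ + (1/3) z₅ − (8/3) z₁ z₂, z₅' = −6A z₄ + 2 z₁ z₃ − 8 z₂ z₄. -/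

import Mathlib

/-- Along solutions of the Hénon–Heiles equations with ε = 16, B = 16A, the functions
z₁ = y₁², z₂ = y₂, z₃ = x₂, z₄ = y₁x₁, z₅ = 3x₁² + 2y₁²y₂ satisfy the
five-dimensional system (8). -/
theorem phi_maps_henonHeiles_to_system8 (A : ℝ) (y₁ y₂ x₁ x₂ : ℝ → ℝ)
    (hy₁ : Differentiable ℝ y₁) (hy₂ : Differentiable ℝ y₂)
    (hx₁ : Differentiable ℝ x₁) (hx₂ : Differentiable ℝ x₂)
    (h₁ : ∀ t, deriv y₁ t = x₁ t)
    (h₂ : ∀ t, deriv y₂ t = x₂ t)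
    (h₃ : ∀ t, deriv x₁ t = -A * y₁ t - 2 * y₁ t * y₂ t)
    (h₄ : ∀ t, deriv x₂ t = -(16 * A) * y₂ t - (y₁ t)^2 - 16 * (y₂ t)^2) :
    (∀ t, deriv (fun s => (y₁ s)^2) t = 2 * (y₁ t * x₁ t)) ∧
    (∀ t, deriv (fun s => y₂ s) t = x₂ t) ∧
    (∀ t, deriv (fun s => x₂ s) t = -((y₁ t)^2) - 16 * A * (y₂ t) - 16 * (y₂ t)^2) ∧
    (∀ t, deriv (fun s => y₁ s * x₁ s) t =
      -A * (y₁ t)^2 + (1/3) * (3 * (x₁ t)^2 + 2 * (y₁ t)^2 * y₂ t)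
        - (8/3) * (y₁ t)^2 * y₂ t) ∧
    (∀ t, deriv (fun s => 3 * (x₁ s)^2 + 2 * (y₁ s)^2 * y₂ s) t =
      -(6 * A) * (y₁ t * x₁ t) + 2 * (y₁ t)^2 * x₂ t - 8 * y₂ t * (y₁ t * x₁ t)) := by
  refine ⟨?_, ?_, ?_, ?_, ?_⟩ <;> intro t
  · rw [deriv_fun_pow (hy₁ t) _, h₁]; ring
  · exact h₂ t
  · rw [show (fun s => x₂ s) = x₂ from rfl, h₄]; ring
  · rw [deriv_fun_mul (hy₁ t) (hx₁ t), h₁, h₃]; ring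
  · have : deriv (fun s => 3 * (x₁ s)^2 + 2 * (y₁ s)^2 * y₂ s) t
        = 3 * (2 * x₁ t * deriv x₁ t) + (2 * (2 * y₁ t * deriv y₁ t) * y₂ t + 2 * (y₁ t)^2 * deriv y₂ t) := by
      have d1 : DifferentiableAt ℝ (fun s => (x₁ s)^2) t := ((hx₁ t)).pow 2
      have d2 : DifferentiableAt ℝ (fun s => (y₁ s)^2) t := ((hy₁ t)).pow 2
      rw [deriv_fun_add ((d1.const_mul 3)) (((d2.const_mul 2)).fun_mul (hy₂ t)),
        deriv_const_mul 3 d1, deriv_fun_mul (d2.const_mul 2) (hy₂ t),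
        deriv_const_mul 2 d2, deriv_fun_pow (hx₁ t) _,
        deriv_fun_pow (hy₁ t) _]
      ring
    rw [this, h₁, h₂, h₃]; ring
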